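/- Let P be a definite logic program whose rules define every predicate symbol occurring in P, with rule set D viewed as a definition of all its predicates, let CF contain all constants and functors of P and at least one constant, and let Σ be all symbols of P and CF. For every ground atom A over Σ that is false in the least Herbrand model LHM_CF(P), the negation ¬A is true in every structure that satisfies D as a definition and satisfies the Herbrand Axiom Herb(CF); that is, the theory {Herb(CF), D} semantically entails ¬A. -/

import Mathlib

/-- Terms over function symbols `Func` (with arities `arF`) and variables `V`.
Constants are the function symbols of arity `0`. -/
inductive Term (Func : Type) (arF : Func → ℕ) (V : Type) : Type
  | var : V → Term Func arF V
  | func : (f : Func) → (Fin (arF f) → Term Func arF V) → Term Func arF V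

/-- Ground terms: terms without variables.  `GTerm Func arF` is the Herbrand
universe `HU(CF)` for the set `CF` of constant and function symbols. -/
abbrev GTerm (Func : Type) (arF : Func → ℕ) : Type := Term Func arF Empty

/-- A first-order structure for the vocabulary with function symbols `Func`
(arities `arF`) and predicate symbols `Pred` (arities `arP`): a nonempty universe
together with interpretations of all function and predicate symbols. -/
structure Struc (Func : Type) (arF : Func → ℕ) (Pred : Type) (arP : Pred → ℕ) : Type 1 where
  carrier : Type
  nonempty : Nonempty carrier
  interpF : (f : Func) → (Fin (arF f) → carrier) → carrier
  interpP : (p : Pred) → (Fin (arP p) → carrier) → Prop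

variable {Func : Type} {arF : Func → ℕ} {Pred : Type} {arP : Pred → ℕ}

/-- Evaluation of a term in a structure under a variable assignment. -/
def Term.eval (M : Struc Func arF Pred arP) {V : Type} (σ : V → M.carrier) :
    Term Func arF V → M.carrier
  | .var v => σ v
  | .func f args => M.interpF f fun i => (args i).eval M σ

/-- An atomic formula `p(t₁, …, tₖ)` with variables from `V`. -/
structure Atom (Func : Type) (arF : Func → ℕ) (Pred : Type) (arP : Pred → ℕ)
    (V : Type) : Type where
  pred : Pred
  args : Fin (arP pred) → Term Func arF V

/-- A rule `A ← B₁, …, Bₙ` of a definite logic program (variables are natural numbers). -/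
structure Rule (Func : Type) (arF : Func → ℕ) (Pred : Type) (arP : Pred → ℕ) : Type where
  head : Atom Func arF Pred arP ℕ
  body : List (Atom Func arF Pred arP ℕ)

/-- Truth of an atom in a structure under an assignment. -/
def Atom.holds (M : Struc Func arF Pred arP) {V : Type} (σ : V → M.carrier)
    (a : Atom Func arF Pred arP V) : Prop :=
  M.interpP a.pred fun i => (a.args i).eval M σ

/-- A structure satisfies a rule as a first-order implication: the universal closure
of `B₁ ∧ ⋯ ∧ Bₙ → A`. -/
def Rule.holds (M : Struc Func arF Pred arP) (r : Rule Func arF Pred arP) : Prop :=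
  ∀ σ : ℕ → M.carrier, (∀ b ∈ r.body, b.holds M σ) → r.head.holds M σ

/-- `M` satisfies all rules of `D` as first-order implications (the Horn theory of `D`). -/
def SatRules (M : Struc Func arF Pred arP) (D : Set (Rule Func arF Pred arP)) : Prop :=
  ∀ r ∈ D, r.holds M

/-- `M` satisfies the rule set `D` as a definition of all predicate symbols:
`M` satisfies every rule as an implication, and for every structure `N` with the same
universe and the same interpretation of all parameter symbols (here: all function
symbols) that satisfies every rule as an implication, `p^M ⊆ p^N` for every defined
predicate `p` (here: every predicate). -/
def SatDef (D : Set (Rule Func arF Pred arP)) (M : Struc Func arF Pred arP) : Prop :=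
  SatRules M D ∧
    ∀ IP : (p : Pred) → (Fin (arP p) → M.carrier) → Prop,
      SatRules ⟨M.carrier, M.nonempty, M.interpF, IP⟩ D →
        ∀ p args, M.interpP p args → IP p args

/-- If `CF` contains at least one constant then the Herbrand universe is nonempty. -/
theorem nonempty_gterm (hc : ∃ f : Func, arF f = 0) : Nonempty (GTerm Func arF) := by
  obtain ⟨f, hf⟩ := hc
  exact ⟨.func f fun i => (Fin.cast hf i).elim0⟩

/-- The Herbrand structure with universe `HU(CF)`, Herbrand values for all constant and
function symbols, and predicate interpretations `IP`. -/
def HStruc (h : Nonempty (GTerm Func arF))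
    (IP : (p : Pred) → (Fin (arP p) → GTerm Func arF) → Prop) :
    Struc Func arF Pred arP :=
  ⟨GTerm Func arF, h, fun f args => .func f args, IP⟩

/-- The least Herbrand model of the program `D`: the Herbrand structure interpreting
each predicate by the intersection of its interpretations over all Herbrand models. -/
def LHM (D : Set (Rule Func arF Pred arP)) (h : Nonempty (GTerm Func arF)) :
    Struc Func arF Pred arP :=
  HStruc h fun p args =>
    ∀ IP : (p : Pred) → (Fin (arP p) → GTerm Func arF) → Prop,
      SatRules (HStruc h IP) D → IP p args

/-- `M` satisfies the Herbrand Axiom `Herb(CF)`: `M` is isomorphic, relative to the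
function symbols `CF`, to a structure with universe `HU(CF)` and Herbrand values for
all symbols of `CF`. -/
def SatHerb (M : Struc Func arF Pred arP) : Prop :=
  ∃ e : GTerm Func arF ≃ M.carrier,
    ∀ (f : Func) (args : Fin (arF f) → GTerm Func arF),
      e (.func f args) = M.interpF f fun i => e (args i)

/-- `M` and `N` are isomorphic relative to the full vocabulary `Σ`: a bijection of the
universes commuting with the interpretations of all function and predicate symbols. -/
def Iso (M N : Struc Func arF Pred arP) : Prop :=
  ∃ e : M.carrier ≃ N.carrier,
    (∀ (f : Func) (args : Fin (arF f) → M.carrier),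
        e (M.interpF f args) = N.interpF f fun i => e (args i)) ∧
    (∀ (p : Pred) (args : Fin (arP p) → M.carrier),
        M.interpP p args ↔ N.interpP p fun i => e (args i))

/-- A ground atom: an atomic formula without variables. -/
abbrev GAtom (Func : Type) (arF : Func → ℕ) (Pred : Type) (arP : Pred → ℕ) : Type :=
  Atom Func arF Pred arP Empty

/-- Truth of a ground atom in a structure. -/
def GAtom.holds (M : Struc Func arF Pred arP) (a : GAtom Func arF Pred arP) : Prop :=
  M.interpP a.pred fun i => (a.args i).eval M fun v => v.elim

/-- For every ground atom `A` over `Σ` that is false in the least Herbrand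
model `LHM_CF(P)`, the negation `¬A` is true in every structure satisfying `D` as a
definition and satisfying `Herb(CF)`: the theory `{Herb(CF), D}` semantically
entails `¬A`. -/
theorem statement_12 (D : Set (Rule Func arF Pred arP))
    (hdef : ∀ p : Pred, ∃ r ∈ D, r.head.pred = p)
    (hc : ∃ f : Func, arF f = 0)
    (A : GAtom Func arF Pred arP)
    (hfalse : ¬ A.holds (LHM D (nonempty_gterm hc))) :
    ∀ M : Struc Func arF Pred arP, SatDef D M → SatHerb M → ¬ A.holds M := by
  intro M hM hHerb hA
  obtain ⟨e, he⟩ := hHerb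
  have h := nonempty_gterm hc
  have hfalse' : ∃ IP : (p : Pred) → (Fin (arP p) → GTerm Func arF) → Prop,
      SatRules (HStruc (nonempty_gterm hc) IP) D ∧
        ¬ IP A.pred (fun i => (A.args i).eval (LHM D (nonempty_gterm hc)) fun v => v.elim) := by
    by_contra hcon
    push_neg at hcon
    exact hfalse fun IP hIP => hcon IP hIP
  obtain ⟨IP, hIPsat, hIPnot⟩ := hfalse'
  -- eval of ground terms in any Herbrand structure is the identity
  have evalid : ∀ (IP' : (p : Pred) → (Fin (arP p) → GTerm Func arF) → Prop)
      (t : GTerm Func arF),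
      t.eval (HStruc h IP') (fun v : Empty => v.elim) = t := by
    intro IP' t
    induction t with
    | var v => exact v.elim
    | func f args ih =>
      show Term.func f _ = Term.func f args
      congr 1; funext i; exact ih i
  -- e commutes with term evaluation
  have evalcomm : ∀ {V : Type} (σ : V → GTerm Func arF) (t : Term Func arF V),
      e (t.eval (HStruc h IP) σ) = t.eval M (fun v => e (σ v)) := by
    intro V σ t
    induction t with
    | var v => rfl
    | func f args ih =>
      show e (Term.func f _) = M.interpF f _
      refine (he f _).trans ?_
      congr 1; funext i; exact ih i
  have evalcomm' : ∀ {V : Type} (σ : V → M.carrier) (t : Term Func arF V),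
      e.symm (t.eval M σ) = t.eval (HStruc h IP) (fun v => e.symm (σ v)) := by
    intro V σ t
    apply e.injective
    rw [Equiv.apply_symm_apply, evalcomm]
    congr 1; funext v; rw [Equiv.apply_symm_apply]
  set IPM : (p : Pred) → (Fin (arP p) → M.carrier) → Prop :=
    fun p args => IP p fun i => e.symm (args i) with hIPM
  have evalNM : ∀ {V : Type} (σ : V → M.carrier) (t : Term Func arF V),
      t.eval ⟨M.carrier, M.nonempty, M.interpF, IPM⟩ σ = t.eval M σ := by
    intro V σ t
    induction t with
    | var v => rfl
    | func f args ih =>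
      show M.interpF f _ = M.interpF f _
      congr 1; funext i; exact ih i
  have key : ∀ (σ : ℕ → M.carrier) (a : Atom Func arF Pred arP ℕ),
      Atom.holds ⟨M.carrier, M.nonempty, M.interpF, IPM⟩ σ a ↔
      Atom.holds (HStruc h IP) (fun n => e.symm (σ n)) a := by
    intro σ a
    unfold Atom.holds
    show IP a.pred (fun i => e.symm
        ((a.args i).eval ⟨M.carrier, M.nonempty, M.interpF, IPM⟩ σ)) ↔ IP a.pred _
    have h1 : (fun i => e.symm
        ((a.args i).eval ⟨M.carrier, M.nonempty, M.interpF, IPM⟩ σ)) =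
        fun i => (a.args i).eval (HStruc h IP) fun n => e.symm (σ n) := by
      funext i; rw [evalNM]; exact evalcomm' σ (a.args i)
    rw [h1]
  have sat : SatRules ⟨M.carrier, M.nonempty, M.interpF, IPM⟩ D := by
    intro r hr σ hbody
    exact (key σ r.head).mpr
      (hIPsat r hr _ (fun b hb => (key σ b).mp (hbody b hb)))
  unfold GAtom.holds at hA
  have hmin := hM.2 IPM sat A.pred (fun i => (A.args i).eval M fun v => v.elim) hA
  apply hIPnot
  have harg : (fun i => (A.args i).eval (LHM D (nonempty_gterm hc)) fun v : Empty => v.elim)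
      = fun i => e.symm ((A.args i).eval M fun v : Empty => v.elim) := by
    funext i
    rw [evalcomm']
    have h2 : (fun v : Empty => e.symm (v.elim : M.carrier)) = (fun v : Empty => v.elim) :=
      funext fun v => v.elim
    rw [h2]; refine Eq.trans ?_ (evalid IP (A.args i)).symm
    exact evalid _ (A.args i)
  rw [harg]
  exact hmin
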